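/- Let (b_u)_{u∈Z} be a sequence with b_u = 0 for u < 0 and b_u = [k − m(n−u−d_i) choose i]_q for u > n − d^⊥ − d_i (an eventually 'q^{m}-geometric-like' tail). Then the power series P(T) = (∑_{u≥0} b_u T^u) · ∏_{j=0}^{i} (1 − q^{mj} T) is a polynomial of degree at most n − d^⊥ − d_i + i + 1, whose coefficient of T^u is p_u = ∑_{j=0}^{i+1} [i+1 choose j]_{q^m} (−1)^j q^{m·binom(j,2)} b_{u−j}. -/

import Mathlib

open PowerSeries

/-- The `q`-binomial coefficient `[a choose b]_q` for an integer `a` and natural `b`. -/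
noncomputable def qbinQ (q : ℚ) (a : ℤ) (b : ℕ) : ℚ :=
  ∏ i ∈ Finset.range b, (q ^ (a - i) - 1) / (q ^ ((i : ℤ) + 1) - 1)

lemma qbinQ_succ (Q : ℚ) (a : ℤ) (j : ℕ) :
    qbinQ Q a (j + 1) = qbinQ Q a j * ((Q ^ (a - j) - 1) / (Q ^ ((j : ℤ) + 1) - 1)) :=
  Finset.prod_range_succ _ _

lemma qbinQ_top_succ (Q : ℚ) (a : ℤ) (j : ℕ) :
    qbinQ Q (a + 1) (j + 1) = qbinQ Q a j * ((Q ^ (a + 1) - 1) / (Q ^ ((j : ℤ) + 1) - 1)) := by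
  induction j with
  | zero => simp [qbinQ]
  | succ j ih =>
      rw [qbinQ_succ, ih, qbinQ_succ]
      have h : a + 1 - ((j + 1 : ℕ) : ℤ) = a - (j : ℕ) := by push_cast; ring
      rw [h]
      push_cast
      ring

lemma qbinQ_pascal (Q : ℚ) (hQ : 2 ≤ Q) (a : ℤ) (j : ℕ) :
    qbinQ Q (a + 1) (j + 1) = qbinQ Q a (j + 1) + Q ^ (a - j) * qbinQ Q a j := by
  have hQ0 : Q ≠ 0 := by linarith
  have hd : Q ^ ((j : ℤ) + 1) - 1 ≠ 0 := by
    have h1 : (1:ℚ) < Q ^ ((j : ℤ) + 1) := by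
      have : (1:ℚ) < Q := by linarith
      exact one_lt_zpow₀ this (by positivity)
    linarith
  have h1 : Q ^ (a + 1) = Q ^ (a - j) * Q ^ ((j : ℤ) + 1) := by
    rw [← zpow_add₀ hQ0]; ring_nf
  rw [qbinQ_top_succ, qbinQ_succ, h1]
  field_simp
  ring


lemma qbinQ_zero (Q : ℚ) (a : ℤ) : qbinQ Q a 0 = 1 := by simp [qbinQ]

lemma qbinQ_nat_self_succ (Q : ℚ) (c : ℕ) : qbinQ Q (c:ℤ) (c+1) = 0 := by
  unfold qbinQ
  apply Finset.prod_eq_zero (Finset.self_mem_range_succ c)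
  simp

lemma qbinQ_sum_eq_prod {R : Type*} [CommRing R] [Algebra ℚ R] (Q : ℚ) (hQ : 2 ≤ Q)
    (c : ℕ) (x : R) :
    ∑ j ∈ Finset.range (c + 1),
        algebraMap ℚ R (qbinQ Q c j * (-1) ^ j * Q ^ j.choose 2) * x ^ j
      = ∏ t ∈ Finset.range c, (1 - algebraMap ℚ R (Q ^ t) * x) := by
  have hQ0 : Q ≠ 0 := by linarith
  induction c with
  | zero => simp [qbinQ_zero]
  | succ c ih =>
    rw [Finset.prod_range_succ, ← ih, Finset.sum_range_succ']
    have hscal : ∀ j : ℕ,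
        qbinQ Q (↑(c+1)) (j+1) * (-1) ^ (j+1) * Q ^ (j+1).choose 2
          = qbinQ Q c (j+1) * (-1) ^ (j+1) * Q ^ (j+1).choose 2
            - Q ^ c * (qbinQ Q c j * (-1) ^ j * Q ^ j.choose 2) := by
      intro j
      have hc : ((c+1 : ℕ) : ℤ) = (c : ℤ) + 1 := by push_cast; ring
      rw [hc, qbinQ_pascal Q hQ c j]
      have hch : (j+1).choose 2 = j.choose 2 + j := by
        rw [Nat.choose_succ_succ j 1, Nat.choose_one_right]; ring
      have hz : Q ^ ((c : ℤ) - j) * Q ^ ((j+1).choose 2) = Q ^ c * Q ^ j.choose 2 := by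
        rw [hch, pow_add, ← zpow_natCast Q j, ← zpow_natCast Q (j.choose 2),
          ← zpow_natCast Q c]
        rw [← zpow_add₀ hQ0, ← zpow_add₀ hQ0, ← zpow_add₀ hQ0]
        congr 1; push_cast; ring
      linear_combination ((-1:ℚ)^(j+1) * qbinQ Q (c:ℤ) j) * hz
    have hqz : qbinQ Q (c:ℤ) (c+1) = 0 := qbinQ_nat_self_succ Q c
    calc
      (∑ j ∈ Finset.range (c+1),
          algebraMap ℚ R (qbinQ Q (↑(c+1)) (j+1) * (-1)^(j+1) * Q^((j+1).choose 2)) * x^(j+1))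
        + algebraMap ℚ R (qbinQ Q (↑(c+1)) 0 * (-1)^0 * Q^(Nat.choose 0 2)) * x^0
        = (∑ j ∈ Finset.range (c+1),
            (algebraMap ℚ R (qbinQ Q (c:ℤ) (j+1) * (-1)^(j+1) * Q^((j+1).choose 2)) * x^(j+1)
            - algebraMap ℚ R (Q^c) * x *
              (algebraMap ℚ R (qbinQ Q (c:ℤ) j * (-1)^j * Q^(j.choose 2)) * x^j)))
          + algebraMap ℚ R (qbinQ Q (c:ℤ) 0 * (-1)^0 * Q^(Nat.choose 0 2)) * x^0 := by
        have h0 : qbinQ Q (↑(c+1):ℤ) 0 = qbinQ Q (c:ℤ) 0 := by rw [qbinQ_zero, qbinQ_zero]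
        rw [h0]
        congr 1
        refine Finset.sum_congr rfl fun j _ => ?_
        rw [hscal j]
        simp only [map_sub, map_mul]
        ring
      _ = ((∑ j ∈ Finset.range (c+1),
            algebraMap ℚ R (qbinQ Q (c:ℤ) (j+1) * (-1)^(j+1) * Q^((j+1).choose 2)) * x^(j+1))
          + algebraMap ℚ R (qbinQ Q (c:ℤ) 0 * (-1)^0 * Q^(Nat.choose 0 2)) * x^0)
          - algebraMap ℚ R (Q^c) * x *
            ∑ j ∈ Finset.range (c+1),
              algebraMap ℚ R (qbinQ Q (c:ℤ) j * (-1)^j * Q^(j.choose 2)) * x^j := by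
        rw [Finset.sum_sub_distrib, Finset.mul_sum]
        ring
      _ = (∑ j ∈ Finset.range (c+1),
            algebraMap ℚ R (qbinQ Q (c:ℤ) j * (-1)^j * Q^(j.choose 2)) * x^j)
          - algebraMap ℚ R (Q^c) * x *
            ∑ j ∈ Finset.range (c+1),
              algebraMap ℚ R (qbinQ Q (c:ℤ) j * (-1)^j * Q^(j.choose 2)) * x^j := by
        congr 1
        rw [← Finset.sum_range_succ' (fun j => algebraMap ℚ R (qbinQ Q (c:ℤ) j * (-1)^j * Q^(j.choose 2)) * x^j) (c+1),
          Finset.sum_range_succ]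
        simp [hqz]
      _ = (∑ j ∈ Finset.range (c+1),
            algebraMap ℚ R (qbinQ Q (c:ℤ) j * (-1)^j * Q^(j.choose 2)) * x^j)
          * (1 - algebraMap ℚ R (Q^c) * x) := by ring

lemma qbinQ_sum_eq_prod_rat (Q : ℚ) (hQ : 2 ≤ Q) (c : ℕ) (x : ℚ) :
    ∑ j ∈ Finset.range (c + 1), qbinQ Q c j * (-1) ^ j * Q ^ j.choose 2 * x ^ j
      = ∏ t ∈ Finset.range c, (1 - Q ^ t * x) := by
  simpa using qbinQ_sum_eq_prod (R := ℚ) Q hQ c x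

open PowerSeries in
lemma qbinQ_prod_eq_sum_ps (Q : ℚ) (hQ : 2 ≤ Q) (c : ℕ) :
    ∏ t ∈ Finset.range c, (1 - PowerSeries.C (Q ^ t) * PowerSeries.X)
      = ∑ j ∈ Finset.range (c + 1),
          PowerSeries.C (qbinQ Q c j * (-1) ^ j * Q ^ j.choose 2) * PowerSeries.X ^ j := by
  have h := qbinQ_sum_eq_prod (R := PowerSeries ℚ) Q hQ c PowerSeries.X
  simp only [PowerSeries.algebraMap_apply, Algebra.algebraMap_self_apply] at h
  exact h.symm

/-- Let `(b_u)_{u ∈ ℤ}` be a sequence with `b_u = 0` for `u < 0` and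
`b_u = [k - m(n-u-d_i) choose i]_q` for `u > n - d^⊥ - d_i`.  Then the power series
`P(T) = (∑_{u ≥ 0} b_u T^u) · ∏_{j=0}^{i} (1 - q^{mj} T)` has coefficients
`p_u = ∑_{j=0}^{i+1} [i+1 choose j]_{q^m} (-1)^j q^{m·binom(j,2)} b_{u-j}` and is a
polynomial of degree at most `n - d^⊥ - d_i + i + 1`. -/
theorem zeta_polynomial_general (q : ℚ) (hq : 2 ≤ q) (m n k dperp di : ℤ) (hm : 1 ≤ m)
    (i : ℕ) (b : ℤ → ℚ) (hneg : ∀ u : ℤ, u < 0 → b u = 0)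
    (htail : ∀ u : ℤ, n - dperp - di < u → b u = qbinQ q (k - m * (n - u - di)) i)
    (P : PowerSeries ℚ)
    (hP : P = (PowerSeries.mk fun u : ℕ => b u) *
      ∏ j ∈ Finset.range (i + 1), (1 - PowerSeries.C (q ^ (m * j)) * PowerSeries.X)) :
    (∀ u : ℕ, PowerSeries.coeff u P =
      ∑ j ∈ Finset.range (i + 2),
        qbinQ (q ^ m) (i + 1) j * (-1) ^ j * q ^ (m * (j.choose 2)) * b ((u : ℤ) - j)) ∧
    (∀ u : ℕ, n - dperp - di + i + 1 < (u : ℤ) → PowerSeries.coeff u P = 0) := by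
  have hq0 : q ≠ 0 := by linarith
  set Q : ℚ := q ^ m with hQdef
  have hQ2 : (2:ℚ) ≤ Q := by
    have h1 : q ^ (1:ℤ) ≤ q ^ m := zpow_le_zpow_right₀ (by linarith) hm
    rw [zpow_one] at h1; linarith
  have hQ0 : Q ≠ 0 := by linarith
  have hCpow : ∀ j : ℕ, (q ^ (m * (j:ℤ)) : ℚ) = Q ^ j := by
    intro j; rw [zpow_mul, zpow_natCast]
  have hprod : (∏ j ∈ Finset.range (i + 1), (1 - PowerSeries.C (q ^ (m * j)) * PowerSeries.X))
      = ∑ j ∈ Finset.range (i + 2),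
          PowerSeries.C (qbinQ Q ((i:ℤ) + 1) j * (-1) ^ j * Q ^ j.choose 2)
            * PowerSeries.X ^ j := by
    have h := qbinQ_prod_eq_sum_ps Q hQ2 (i + 1)
    push_cast at h
    simp only [hCpow]
    exact h
  have hco : ∀ u : ℕ, PowerSeries.coeff u P =
      ∑ j ∈ Finset.range (i + 2),
        qbinQ (q ^ m) (i + 1) j * (-1) ^ j * q ^ (m * (j.choose 2)) * b ((u : ℤ) - j) := by
    intro u
    rw [hP, hprod, Finset.mul_sum, map_sum]
    refine Finset.sum_congr rfl fun j hj => ?_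
    rw [show (PowerSeries.mk fun u : ℕ => b u) *
          (PowerSeries.C (qbinQ Q ((i:ℤ) + 1) j * (-1) ^ j * Q ^ j.choose 2)
            * PowerSeries.X ^ j)
        = PowerSeries.C (qbinQ Q ((i:ℤ) + 1) j * (-1) ^ j * Q ^ j.choose 2)
            * ((PowerSeries.mk fun u : ℕ => b u) * PowerSeries.X ^ j) by ring]
    rw [PowerSeries.coeff_C_mul, PowerSeries.coeff_mul_X_pow']
    have hc2 : (q ^ (m * ((j.choose 2 : ℕ) : ℤ)) : ℚ) = Q ^ j.choose 2 := hCpow _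
    rw [hc2]
    split_ifs with h
    · rw [PowerSeries.coeff_mk, Nat.cast_sub h]
    · have hneg' : ((u:ℤ) - j) < 0 := by
        have : u < j := Nat.lt_of_not_le h
        omega
      rw [hneg _ hneg', mul_zero]
  refine ⟨hco, ?_⟩
  intro u hu
  rw [hco u]
  set a : ℤ := k - m * (n - u - di) with hadef
  set D : ℚ := ∏ t ∈ Finset.range i, (q ^ ((t:ℤ) + 1) - 1)⁻¹ with hDdef
  set G : Polynomial ℚ :=
    ∏ t ∈ Finset.range i, (Polynomial.C (q ^ (a - (t:ℤ))) * Polynomial.X - 1) with hGdef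
  have hGdeg : G.natDegree < i + 1 := by
    have h1 : G.natDegree ≤ ∑ t ∈ Finset.range i, 1 := by
      refine le_trans (Polynomial.natDegree_prod_le _ _) (Finset.sum_le_sum fun t _ => ?_)
      refine le_trans (Polynomial.natDegree_sub_le _ _) ?_
      simp only [Polynomial.natDegree_one, max_le_iff, Nat.zero_le, and_true]
      exact (Polynomial.natDegree_C_mul_le _ _).trans (by simp)
    simp only [Finset.sum_const, Finset.card_range, smul_eq_mul, mul_one] at h1
    omega
  have hb' : ∀ j ∈ Finset.range (i + 2),
      b ((u:ℤ) - j) = D * Polynomial.eval ((Q⁻¹) ^ j) G := by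
    intro j hj
    have hj' : (j:ℤ) ≤ (i:ℤ) + 1 := by
      have := Finset.mem_range.mp hj
      omega
    have hu' : n - dperp - di < (u:ℤ) - j := by omega
    rw [htail _ hu', show k - m * (n - ((u:ℤ) - j) - di) = a - m * j by rw [hadef]; ring]
    unfold qbinQ
    rw [hGdef, Polynomial.eval_prod, hDdef, ← Finset.prod_mul_distrib]
    refine Finset.prod_congr rfl fun t ht => ?_
    simp only [Polynomial.eval_sub, Polynomial.eval_mul, Polynomial.eval_C,
      Polynomial.eval_X, Polynomial.eval_one]
    have hzz : q ^ (a - m * (j:ℤ) - (t:ℤ)) = q ^ (a - (t:ℤ)) * (Q⁻¹) ^ j := by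
      rw [show a - m * (j:ℤ) - (t:ℤ) = (a - (t:ℤ)) + (-(m * j)) by ring,
        zpow_add₀ hq0, zpow_neg, hCpow j, inv_pow]
    rw [div_eq_mul_inv, hzz]
    ring
  have hinner : ∀ s ∈ Finset.range (i + 1),
      (∑ j ∈ Finset.range (i + 2),
        qbinQ (q ^ m) ((i:ℤ) + 1) j * (-1) ^ j * q ^ (m * ((j.choose 2 : ℕ) : ℤ))
          * ((Q⁻¹) ^ s) ^ j) = 0 := by
    intro s hs
    have h := qbinQ_sum_eq_prod_rat Q hQ2 (i + 1) ((Q⁻¹) ^ s)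
    push_cast at h
    have hcongr : (∑ j ∈ Finset.range (i + 2),
        qbinQ (q ^ m) ((i:ℤ) + 1) j * (-1) ^ j * q ^ (m * ((j.choose 2 : ℕ) : ℤ))
          * ((Q⁻¹) ^ s) ^ j)
        = ∑ j ∈ Finset.range (i + 2),
            qbinQ Q ((i:ℤ) + 1) j * (-1) ^ j * Q ^ j.choose 2 * ((Q⁻¹) ^ s) ^ j := by
      refine Finset.sum_congr rfl fun j _ => ?_
      rw [hCpow (j.choose 2)]
    rw [hcongr, h]
    refine Finset.prod_eq_zero hs ?_
    rw [inv_pow, mul_inv_cancel₀ (pow_ne_zero _ hQ0), sub_self]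
  calc
    (∑ j ∈ Finset.range (i + 2),
        qbinQ (q ^ m) ((i:ℤ) + 1) j * (-1) ^ j * q ^ (m * ((j.choose 2 : ℕ) : ℤ))
          * b ((u:ℤ) - j))
      = ∑ j ∈ Finset.range (i + 2), ∑ s ∈ Finset.range (i + 1),
          (D * G.coeff s) *
            (qbinQ (q ^ m) ((i:ℤ) + 1) j * (-1) ^ j * q ^ (m * ((j.choose 2 : ℕ) : ℤ))
              * ((Q⁻¹) ^ s) ^ j) := by
        refine Finset.sum_congr rfl fun j hj => ?_
        rw [hb' j hj, Polynomial.eval_eq_sum_range' hGdeg, Finset.mul_sum, Finset.mul_sum]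
        refine Finset.sum_congr rfl fun s hs => ?_
        ring
    _ = ∑ s ∈ Finset.range (i + 1), (D * G.coeff s) *
          ∑ j ∈ Finset.range (i + 2),
            qbinQ (q ^ m) ((i:ℤ) + 1) j * (-1) ^ j * q ^ (m * ((j.choose 2 : ℕ) : ℤ))
              * ((Q⁻¹) ^ s) ^ j := by
        rw [Finset.sum_comm]
        exact Finset.sum_congr rfl fun s _ => (Finset.mul_sum _ _ _).symm
    _ = 0 := by
        refine Finset.sum_eq_zero fun s hs => ?_
        rw [hinner s hs, mul_zero]
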